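/- In a locally transitive tournament, the colors of the edges at one vertex determine a unique admissible coloring: if r is a locally transitive tournament on a finite set V, v₀ ∈ V, and c₀ assigns an element of ℤ/2ℤ to each pair {v₀, u} with u ≠ v₀, then there exists exactly one admissible coloring c of the tournament with c{v₀,u} = c₀{v₀,u} for all u ≠ v₀. In particular every locally transitive tournament admits an admissible coloring. -/
import Mathlib


/-- `r` is a tournament on `V`: an irreflexive relation such that for all distinct
`u, w` exactly one of `r u w` and `r w u` holds. -/
def IsTournament {V : Type*} (r : V → V → Prop) : Prop :=
  (∀ v, ¬ r v v) ∧ ∀ u w, u ≠ w → (r u w ↔ ¬ r w u)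

/-- A tournament is locally transitive if for every vertex `v` the restriction of `r`
to the in-neighborhood and to the out-neighborhood are both transitive. -/
def IsLocallyTransitive {V : Type*} (r : V → V → Prop) : Prop :=
  ∀ v, (∀ a b c, r a v → r b v → r c v → r a b → r b c → r a c) ∧
       (∀ a b c, r v a → r v b → r v c → r a b → r b c → r a c)

/-- The restriction of `r` to `{i, j, k}` is a directed 3-cycle. -/
def IsCycle3 {V : Type*} (r : V → V → Prop) (i j k : V) : Prop :=
  (r i j ∧ r j k ∧ r k i) ∨ (r i k ∧ r k j ∧ r j i)

/-- The restriction of `r` to `{i, j, k}` is transitive, i.e. has a source and a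
sink (some ordering `a, b, c` of `i, j, k` has `r a b`, `r b c`, `r a c`). -/
def IsTrans3 {V : Type*} (r : V → V → Prop) (i j k : V) : Prop :=
  (r i j ∧ r j k ∧ r i k) ∨ (r i k ∧ r k j ∧ r i j) ∨ (r j i ∧ r i k ∧ r j k) ∨
  (r j k ∧ r k i ∧ r j i) ∨ (r k i ∧ r i j ∧ r k j) ∨ (r k j ∧ r j i ∧ r k i)

/-- A (symmetric) `ℤ/2ℤ`-coloring of the pairs of distinct vertices is admissible if
on every directed 3-cycle the colors sum to `0` and on every transitive triple they
sum to `1`. -/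
def IsAdmissibleColoring {V : Type*} (r : V → V → Prop) (c : V → V → ZMod 2) : Prop :=
  ∀ i j k : V, i ≠ j → j ≠ k → i ≠ k →
    (IsCycle3 r i j k → c i j + c j k + c i k = 0) ∧
    (IsTrans3 r i j k → c i j + c j k + c i k = 1)

lemma keyP {V : Type*} {r : V → V → Prop} (htour : IsTournament r)
    (hloc : IsLocallyTransitive r) (v₀ i j k : V)
    (hi : i ≠ v₀) (hj : j ≠ v₀) (hk : k ≠ v₀)
    (hij : i ≠ j) (hjk : j ≠ k) (hik : i ≠ k) :
    (IsCycle3 r i j k → ¬ (IsTrans3 r v₀ i j ↔ (IsTrans3 r v₀ j k ↔ IsTrans3 r v₀ i k))) ∧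
    (IsTrans3 r i j k → (IsTrans3 r v₀ i j ↔ (IsTrans3 r v₀ j k ↔ IsTrans3 r v₀ i k))) := by
  obtain ⟨hirr, hA⟩ := htour
  have Riv : r i v₀ ↔ ¬ r v₀ i := hA i v₀ hi
  have Rjv : r j v₀ ↔ ¬ r v₀ j := hA j v₀ hj
  have Rkv : r k v₀ ↔ ¬ r v₀ k := hA k v₀ hk
  have Rji : r j i ↔ ¬ r i j := hA j i hij.symm
  have Rkj : r k j ↔ ¬ r j k := hA k j hjk.symm
  have Rki : r k i ↔ ¬ r i k := hA k i hik.symm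
  have OUT : ∀ p a b c : V, a ≠ c → r p a → r p b → r p c → r a b → r b c → r c a → False :=
    fun p a b c hac h1 h2 h3 h4 h5 h6 =>
      (hA a c hac).mp ((hloc p).2 a b c h1 h2 h3 h4 h5) h6
  have IN : ∀ p a b c : V, a ≠ c → r a p → r b p → r c p → r a b → r b c → r c a → False :=
    fun p a b c hac h1 h2 h3 h4 h5 h6 =>
      (hA a c hac).mp ((hloc p).1 a b c h1 h2 h3 h4 h5) h6
  have F1 : ¬(r v₀ i ∧ r v₀ j ∧ r v₀ k ∧ r i j ∧ r j k ∧ ¬ r i k) :=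
    fun ⟨ha,hb,hc,hx,hy,hz⟩ => OUT v₀ i j k hik ha hb hc hx hy (Rki.mpr hz)
  have F2 : ¬(r v₀ i ∧ r v₀ j ∧ r v₀ k ∧ ¬ r i j ∧ ¬ r j k ∧ r i k) :=
    fun ⟨ha,hb,hc,hx,hy,hz⟩ => OUT v₀ i k j hij ha hc hb hz (Rkj.mpr hy) (Rji.mpr hx)
  have F3 : ¬(¬ r v₀ i ∧ ¬ r v₀ j ∧ ¬ r v₀ k ∧ r i j ∧ r j k ∧ ¬ r i k) :=
    fun ⟨ha,hb,hc,hx,hy,hz⟩ => IN v₀ i j k hik (Riv.mpr ha) (Rjv.mpr hb) (Rkv.mpr hc) hx hy (Rki.mpr hz)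
  have F4 : ¬(¬ r v₀ i ∧ ¬ r v₀ j ∧ ¬ r v₀ k ∧ ¬ r i j ∧ ¬ r j k ∧ r i k) :=
    fun ⟨ha,hb,hc,hx,hy,hz⟩ => IN v₀ i k j hij (Riv.mpr ha) (Rkv.mpr hc) (Rjv.mpr hb) hz (Rkj.mpr hy) (Rji.mpr hx)
  have F5 : ¬(r v₀ i ∧ r v₀ j ∧ ¬ r v₀ k ∧ r i j ∧ ¬ r j k ∧ r i k) :=
    fun ⟨ha,hb,hc,hx,hy,hz⟩ => IN j v₀ i k hk.symm hb hx (Rkj.mpr hy) ha hz (Rkv.mpr hc)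
  have F6 : ¬(r v₀ i ∧ r v₀ j ∧ ¬ r v₀ k ∧ ¬ r i j ∧ r j k ∧ ¬ r i k) :=
    fun ⟨ha,hb,hc,hx,hy,hz⟩ => IN i v₀ j k hk.symm ha (Rji.mpr hx) (Rki.mpr hz) hb hy (Rkv.mpr hc)
  have F7 : ¬(r v₀ i ∧ ¬ r v₀ j ∧ r v₀ k ∧ r i j ∧ r j k ∧ r i k) :=
    fun ⟨ha,hb,hc,hx,hy,hz⟩ => IN k v₀ i j hj.symm hc hz hy ha hx (Rjv.mpr hb)
  have F8 : ¬(r v₀ i ∧ ¬ r v₀ j ∧ r v₀ k ∧ ¬ r i j ∧ ¬ r j k ∧ ¬ r i k) :=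
    fun ⟨ha,hb,hc,hx,hy,hz⟩ => IN i v₀ k j hj.symm ha (Rki.mpr hz) (Rji.mpr hx) hc (Rkj.mpr hy) (Rjv.mpr hb)
  have F9 : ¬(¬ r v₀ i ∧ r v₀ j ∧ r v₀ k ∧ ¬ r i j ∧ r j k ∧ r i k) :=
    fun ⟨ha,hb,hc,hx,hy,hz⟩ => IN k v₀ j i hi.symm hc hy hz hb (Rji.mpr hx) (Riv.mpr ha)
  have F10 : ¬(¬ r v₀ i ∧ r v₀ j ∧ r v₀ k ∧ r i j ∧ ¬ r j k ∧ ¬ r i k) :=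
    fun ⟨ha,hb,hc,hx,hy,hz⟩ => IN j v₀ k i hi.symm hb (Rkj.mpr hy) hx hc (Rki.mpr hz) (Riv.mpr ha)
  have F11 : ¬(¬ r v₀ i ∧ ¬ r v₀ j ∧ r v₀ k ∧ r i j ∧ ¬ r j k ∧ r i k) :=
    fun ⟨ha,hb,hc,hx,hy,hz⟩ => OUT i v₀ k j hj.symm (Riv.mpr ha) hz hx hc (Rkj.mpr hy) (Rjv.mpr hb)
  have F12 : ¬(¬ r v₀ i ∧ ¬ r v₀ j ∧ r v₀ k ∧ ¬ r i j ∧ r j k ∧ ¬ r i k) :=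
    fun ⟨ha,hb,hc,hx,hy,hz⟩ => OUT j v₀ k i hi.symm (Rjv.mpr hb) hy (Rji.mpr hx) hc (Rki.mpr hz) (Riv.mpr ha)
  have F13 : ¬(¬ r v₀ i ∧ r v₀ j ∧ ¬ r v₀ k ∧ r i j ∧ r j k ∧ r i k) :=
    fun ⟨ha,hb,hc,hx,hy,hz⟩ => OUT i v₀ j k hk.symm (Riv.mpr ha) hx hz hb hy (Rkv.mpr hc)
  have F14 : ¬(¬ r v₀ i ∧ r v₀ j ∧ ¬ r v₀ k ∧ ¬ r i j ∧ ¬ r j k ∧ ¬ r i k) :=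
    fun ⟨ha,hb,hc,hx,hy,hz⟩ => OUT k v₀ j i hi.symm (Rkv.mpr hc) (Rkj.mpr hy) (Rki.mpr hz) hb (Rji.mpr hx) (Riv.mpr ha)
  have F15 : ¬(r v₀ i ∧ ¬ r v₀ j ∧ ¬ r v₀ k ∧ ¬ r i j ∧ r j k ∧ r i k) :=
    fun ⟨ha,hb,hc,hx,hy,hz⟩ => OUT j v₀ i k hk.symm (Rjv.mpr hb) (Rji.mpr hx) hy ha hz (Rkv.mpr hc)
  have F16 : ¬(r v₀ i ∧ ¬ r v₀ j ∧ ¬ r v₀ k ∧ r i j ∧ ¬ r j k ∧ ¬ r i k) :=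
    fun ⟨ha,hb,hc,hx,hy,hz⟩ => OUT k v₀ i j hj.symm (Rkv.mpr hc) (Rki.mpr hz) (Rkj.mpr hy) ha hx (Rjv.mpr hb)
  clear OUT IN hirr hA hloc
  by_cases hvi : r v₀ i <;> by_cases hvj : r v₀ j <;> by_cases hvk : r v₀ k <;>
    by_cases hx : r i j <;> by_cases hy : r j k <;> by_cases hz : r i k <;>
      simp_all [IsCycle3, IsTrans3]

lemma t3_comm {V : Type*} (r : V → V → Prop) (v i j : V) :
    IsTrans3 r v i j ↔ IsTrans3 r v j i := by
  unfold IsTrans3; tauto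

lemma c3_shift {V : Type*} (r : V → V → Prop) (i j k : V) :
    IsCycle3 r i j k ↔ IsCycle3 r k i j := by
  unfold IsCycle3; tauto

lemma t3_shift {V : Type*} (r : V → V → Prop) (i j k : V) :
    IsTrans3 r i j k ↔ IsTrans3 r k i j := by
  unfold IsTrans3; tauto

lemma c3_perm1 {V : Type*} (r : V → V → Prop) (i j k : V) :
    IsCycle3 r i j k ↔ IsCycle3 r j i k := by
  unfold IsCycle3; tauto

lemma t3_perm1 {V : Type*} (r : V → V → Prop) (i j k : V) :
    IsTrans3 r i j k ↔ IsTrans3 r j i k := by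
  unfold IsTrans3; tauto

lemma tot3 {V : Type*} {r : V → V → Prop} (htour : IsTournament r) (i j k : V)
    (hij : i ≠ j) (hjk : j ≠ k) (hik : i ≠ k) :
    IsCycle3 r i j k ∨ IsTrans3 r i j k := by
  have h1 := htour.2 i j hij
  have h2 := htour.2 j k hjk
  have h3 := htour.2 i k hik
  by_cases a : r i j <;> by_cases b : r j k <;> by_cases c : r i k <;>
    simp_all [IsCycle3, IsTrans3]

lemma not_both3 {V : Type*} {r : V → V → Prop} (htour : IsTournament r) (i j k : V)
    (hij : i ≠ j) (hjk : j ≠ k) (hik : i ≠ k) (h : IsCycle3 r i j k) :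
    ¬ IsTrans3 r i j k := by
  have h1 := htour.2 i j hij
  have h2 := htour.2 j k hjk
  have h3 := htour.2 i k hik
  by_cases a : r i j <;> by_cases b : r j k <;> by_cases c : r i k <;>
    simp_all [IsCycle3, IsTrans3]

lemma par0 (P Q R : Prop) [Decidable P] [Decidable Q] [Decidable R]
    (h : ¬ (P ↔ (Q ↔ R))) :
    (if P then (1 : ZMod 2) else 0) + (if Q then (1 : ZMod 2) else 0) +
      (if R then (1 : ZMod 2) else 0) = 0 := by
  by_cases hP : P <;> by_cases hQ : Q <;> by_cases hR : R <;>
    simp_all <;> decide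

lemma par1 (P Q R : Prop) [Decidable P] [Decidable Q] [Decidable R]
    (h : P ↔ (Q ↔ R)) :
    (if P then (1 : ZMod 2) else 0) + (if Q then (1 : ZMod 2) else 0) +
      (if R then (1 : ZMod 2) else 0) = 1 := by
  by_cases hP : P <;> by_cases hQ : Q <;> by_cases hR : R <;>
    simp_all <;> decide

/-- In a locally transitive tournament, the colors of the edges at one vertex
determine a unique admissible coloring: given `v₀` and prescribed colors `c₀` on the
pairs `{v₀, u}`, there is exactly one symmetric admissible coloring extending `c₀`
(uniqueness holding on all pairs of distinct vertices). In particular every locally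
transitive tournament admits an admissible coloring. -/
theorem admissible_coloring_exists_unique {V : Type*} [Fintype V]
    (r : V → V → Prop) (htour : IsTournament r) (hloc : IsLocallyTransitive r)
    (v₀ : V) (c₀ : V → ZMod 2) :
    ∃ c : V → V → ZMod 2,
      ((∀ u w, c u w = c w u) ∧ IsAdmissibleColoring r c ∧
        (∀ u, u ≠ v₀ → c v₀ u = c₀ u)) ∧
      ∀ c' : V → V → ZMod 2,
        ((∀ u w, c' u w = c' w u) ∧ IsAdmissibleColoring r c' ∧
          (∀ u, u ≠ v₀ → c' v₀ u = c₀ u)) →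
        ∀ u w, u ≠ w → c' u w = c u w := by
  classical
  set d : V → ZMod 2 := fun u => if u = v₀ then 0 else c₀ u with hd
  set e : V → V → ZMod 2 :=
    fun u w => if (u ≠ v₀ ∧ w ≠ v₀ ∧ IsTrans3 r v₀ u w) then 1 else 0 with he
  have ev : ∀ u, e v₀ u = 0 := by
    intro u; simp [he]
  have ev' : ∀ u, e u v₀ = 0 := by
    intro u; simp [he]
  have eval : ∀ u w, u ≠ v₀ → w ≠ v₀ →
      e u w = if IsTrans3 r v₀ u w then 1 else 0 := by
    intro u w hu hw
    simp only [he]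
    refine if_congr ⟨fun h => h.2.2, fun h => ⟨hu, hw, h⟩⟩ rfl rfl
  have esymm : ∀ u w, e u w = e w u := by
    intro u w
    simp only [he]
    refine if_congr ⟨fun h => ⟨h.2.1, h.1, (t3_comm r v₀ u w).mp h.2.2⟩,
      fun h => ⟨h.2.1, h.1, (t3_comm r v₀ u w).mpr h.2.2⟩⟩ rfl rfl
  have dv : d v₀ = 0 := by simp [hd]
  have dne : ∀ u, u ≠ v₀ → d u = c₀ u := by intro u hu; simp [hd, hu]
  have hsum : ∀ p q s a b c : ZMod 2,
      (p + q + a) + (q + s + b) + (p + s + c) = a + b + c := by decide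
  have hadm : IsAdmissibleColoring r (fun u w => d u + d w + e u w) := by
    intro i j k hij hjk hik
    simp only
    rw [hsum (d i) (d j) (d k) (e i j) (e j k) (e i k)]
    by_cases hiv : i = v₀
    · subst hiv
      rw [ev, ev]
      rw [eval j k (Ne.symm hij) (Ne.symm hik)]
      constructor
      · intro hc
        rw [if_neg (not_both3 htour i j k hij hjk hik hc)]
        decide
      · intro ht
        rw [if_pos ht]
        decide
    · by_cases hjv : j = v₀
      · subst hjv
        rw [ev, ev']
        rw [eval i k hiv (Ne.symm hjk)]
        constructor
        · intro hc
          have hc' : IsCycle3 r j i k := (c3_perm1 r i j k).mp hc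
          rw [if_neg (not_both3 htour j i k (Ne.symm hiv) hik hjk hc')]
          decide
        · intro ht
          have ht' : IsTrans3 r j i k := (t3_perm1 r i j k).mp ht
          rw [if_pos ht']
          decide
      · by_cases hkv : k = v₀
        · subst hkv
          rw [ev', ev']
          rw [eval i j hiv hjv]
          constructor
          · intro hc
            have hc' : IsCycle3 r k i j := (c3_shift r i j k).mp hc
            rw [if_neg (not_both3 htour k i j (Ne.symm hiv) hij (Ne.symm hjv) hc')]
            decide
          · intro ht
            have ht' : IsTrans3 r k i j := (t3_shift r i j k).mp ht
            rw [if_pos ht']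
            decide
        · rw [eval i j hiv hjv, eval j k hjv hkv, eval i k hiv hkv]
          have hkey := keyP htour hloc v₀ i j k hiv hjv hkv hij hjk hik
          exact ⟨fun hc => par0 _ _ _ (hkey.1 hc), fun ht => par1 _ _ _ (hkey.2 ht)⟩
  refine ⟨fun u w => d u + d w + e u w, ⟨?_, hadm, ?_⟩, ?_⟩
  · intro u w
    simp only [esymm u w]
    ring
  · intro u hu
    simp only [dv, dne u hu, ev u]
    ring
  · rintro c' ⟨hsymm', hadm', hbd'⟩ u w huw
    simp only
    by_cases huv : u = v₀
    · subst huv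
      have hwv : w ≠ u := Ne.symm huw
      rw [hbd' w hwv, dv, dne w hwv, ev w]
      ring
    · by_cases hwv : w = v₀
      · subst hwv
        rw [hsymm' u w, hbd' u huv, dv, dne u huv, ev' u]
        ring
      · have h1 : v₀ ≠ u := Ne.symm huv
        have h2 : v₀ ≠ w := Ne.symm hwv
        have hA' := hadm' v₀ u w h1 huw h2
        have hb1 : c' v₀ u = c₀ u := hbd' u huv
        have hb2 : c' v₀ w = c₀ w := hbd' w hwv
        rw [eval u w huv hwv, dne u huv, dne w hwv]
        have L0 : ∀ a b x : ZMod 2, a + x + b = 0 → x = a + b + 0 := by decide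
        have L1 : ∀ a b x : ZMod 2, a + x + b = 1 → x = a + b + 1 := by decide
        rcases tot3 htour v₀ u w h1 huw h2 with hc | ht
        · have hs := hA'.1 hc
          rw [hb1, hb2] at hs
          rw [if_neg (not_both3 htour v₀ u w h1 huw h2 hc)]
          exact L0 _ _ _ hs
        · have hs := hA'.2 ht
          rw [hb1, hb2] at hs
          rw [if_pos ht]
          exact L1 _ _ _ hs
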